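/- For a completely randomized assignment and any two distinct nonempty subsets A ≠ B of {1,…,K}, the sampling covariance of the estimated factorial effects is Cov(τ̂_A, τ̂_B) = (1/(2^{2(K−1)} r)) [ Σ_{z ∈ Z_A^− ∩ Z_B^−} S²(z) − Σ_{z ∈ Z_A^− ∩ Z_B^+} S²(z) − Σ_{z ∈ Z_A^+ ∩ Z_B^−} S²(z) + Σ_{z ∈ Z_A^+ ∩ Z_B^+} S²(z) ] − (1/N) S_{AB}², where S_{AB}² = (1/(N−1)) Σ_{i=1}^N (τ_{iA} − τ̄_A)(τ_{iB} − τ̄_B). -/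

import Mathlib

open Finset

noncomputable section

/-- A treatment combination in a 2^K factorial design: each of the K factors
is at its low level (`false`, coded −1) or high level (`true`, coded +1). -/
abbrev Combo (K : ℕ) := Fin K → Bool

/-- The completely randomized assignments: each of the 2^K treatment
combinations receives exactly `r` of the `N` units. -/
def Assignments (K N r : ℕ) : Finset (Fin N → Combo K) :=
  Finset.univ.filter (fun ω => ∀ z : Combo K, (Finset.univ.filter (fun i => ω i = z)).card = r)

/-- Expectation over the uniform distribution on completely randomized assignments. -/
def expect (K N r : ℕ) (f : (Fin N → Combo K) → ℝ) : ℝ :=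
  (∑ ω ∈ Assignments K N r, f ω) / ((Assignments K N r).card : ℝ)

/-- Variance over the uniform distribution on completely randomized assignments. -/
def variance (K N r : ℕ) (f : (Fin N → Combo K) → ℝ) : ℝ :=
  expect K N r (fun ω => (f ω - expect K N r f) ^ 2)

/-- Covariance over the uniform distribution on completely randomized assignments. -/
def covariance (K N r : ℕ) (f g : (Fin N → Combo K) → ℝ) : ℝ :=
  expect K N r (fun ω => (f ω - expect K N r f) * (g ω - expect K N r g))

/-- The assignment indicator W_i(z). -/
def Wvar (K N : ℕ) (ω : Fin N → Combo K) (i : Fin N) (z : Combo K) : ℝ :=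
  if ω i = z then 1 else 0

/-- The population mean Ȳ(z) of the potential outcomes under z. -/
def Ybar (K N : ℕ) (Y : Fin N → Combo K → ℝ) (z : Combo K) : ℝ :=
  (∑ i, Y i z) / (N : ℝ)

/-- The observed treatment mean Ȳ^obs(z) = (1/r) Σ_{i : W_i(z)=1} Y_i(z). -/
def YbarObs (K N r : ℕ) (Y : Fin N → Combo K → ℝ)
    (ω : Fin N → Combo K) (z : Combo K) : ℝ :=
  (∑ i, if ω i = z then Y i z else 0) / (r : ℝ)

/-- Finite-population variance S²(z) (divisor N−1). -/
def Ssq (K N : ℕ) (Y : Fin N → Combo K → ℝ) (z : Combo K) : ℝ :=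
  (∑ i, (Y i z - Ybar K N Y z) ^ 2) / ((N : ℝ) - 1)

/-- Finite-population covariance S²(z, z*) (divisor N−1). -/
def Scov (K N : ℕ) (Y : Fin N → Combo K → ℝ) (z zs : Combo K) : ℝ :=
  (∑ i, (Y i z - Ybar K N Y z) * (Y i zs - Ybar K N Y zs)) / ((N : ℝ) - 1)

/-- The contrast g_A(z) = Π_{k ∈ A} z_k ∈ {−1, +1}. -/
def gA (K : ℕ) (A : Finset (Fin K)) (z : Combo K) : ℝ :=
  ∏ k ∈ A, (if z k then (1 : ℝ) else -1)

/-- The unit-level factorial effect τ_{iA} = 2^{−(K−1)} Σ_z g_A(z) Y_i(z). -/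
def tauUnit (K N : ℕ) (Y : Fin N → Combo K → ℝ) (A : Finset (Fin K)) (i : Fin N) : ℝ :=
  (∑ z : Combo K, gA K A z * Y i z) / (2 : ℝ) ^ (K - 1)

/-- The population-level factorial effect τ̄_A = (1/N) Σ_i τ_{iA}. -/
def tauBar (K N : ℕ) (Y : Fin N → Combo K → ℝ) (A : Finset (Fin K)) : ℝ :=
  (∑ i, tauUnit K N Y A i) / (N : ℝ)

/-- The estimated factorial effect τ̂_A = 2^{−(K−1)} Σ_z g_A(z) Ȳ^obs(z). -/
def tauHat (K N r : ℕ) (Y : Fin N → Combo K → ℝ) (A : Finset (Fin K))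
    (ω : Fin N → Combo K) : ℝ :=
  (∑ z : Combo K, gA K A z * YbarObs K N r Y ω z) / (2 : ℝ) ^ (K - 1)

/-- The finite-population variance S_A² of the unit-level factorial effects. -/
def SsqA (K N : ℕ) (Y : Fin N → Combo K → ℝ) (A : Finset (Fin K)) : ℝ :=
  (∑ i, (tauUnit K N Y A i - tauBar K N Y A) ^ 2) / ((N : ℝ) - 1)

/-- Strict additivity: unit-level differences of potential outcomes between any
two treatment combinations are constant across units. -/
def StrictAdditivity (K N : ℕ) (Y : Fin N → Combo K → ℝ) : Prop :=
  ∀ z zs : Combo K, ∀ i i' : Fin N, Y i z - Y i zs = Y i' z - Y i' zs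

/-- Compound symmetry: common variance S² > 0 and common correlation ρ,
i.e. S²(z) = S² for all z and S²(z,z*) = ρ S² for all z ≠ z*. -/
def CompoundSymmetry (K N : ℕ) (Y : Fin N → Combo K → ℝ) (S2 ρ : ℝ) : Prop :=
  0 < S2 ∧ (∀ z : Combo K, Ssq K N Y z = S2) ∧
    ∀ z zs : Combo K, z ≠ zs → Scov K N Y z zs = ρ * S2

open scoped Classical in
/-- The set Z_A^+ of treatment combinations with g_A(z) = +1. -/
def Zplus (K : ℕ) (A : Finset (Fin K)) : Finset (Combo K) :=
  Finset.univ.filter (fun z => gA K A z = 1)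

open scoped Classical in
/-- The set Z_A^− of treatment combinations with g_A(z) = −1. -/
def Zminus (K : ℕ) (A : Finset (Fin K)) : Finset (Combo K) :=
  Finset.univ.filter (fun z => gA K A z = -1)

/-- The finite-population covariance S_{AB}² between unit-level factorial
effects τ_{iA} and τ_{iB}. -/
def SsqAB (K N : ℕ) (Y : Fin N → Combo K → ℝ) (A B : Finset (Fin K)) : ℝ :=
  (∑ i, (tauUnit K N Y A i - tauBar K N Y A) * (tauUnit K N Y B i - tauBar K N Y B)) /
    ((N : ℝ) - 1)

section Aux

variable {K N r : ℕ}

lemma mem_assignments {ω : Fin N → Combo K} :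
    ω ∈ Assignments K N r ↔ ∀ z : Combo K, (Finset.univ.filter (fun i => ω i = z)).card = r := by
  simp [Assignments]

lemma comp_perm_mem (σ : Equiv.Perm (Fin N)) {ω : Fin N → Combo K}
    (h : ω ∈ Assignments K N r) : (ω ∘ σ) ∈ Assignments K N r := by
  rw [mem_assignments] at h ⊢
  intro z
  rw [← h z]
  exact Finset.card_equiv σ (by simp)

lemma postcomp_mem (π : Equiv.Perm (Combo K)) {ω : Fin N → Combo K}
    (h : ω ∈ Assignments K N r) : (π ∘ ω) ∈ Assignments K N r := by
  rw [mem_assignments] at h ⊢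
  intro z
  rw [← h (π.symm z)]
  congr 1
  ext i
  simp [Equiv.apply_eq_iff_eq_symm_apply]

/-- Invariance of counts under precomposition with a permutation of units. -/
lemma card_filter_comp (σ : Equiv.Perm (Fin N)) (P : (Fin N → Combo K) → Prop)
    [DecidablePred P] :
    ((Assignments K N r).filter fun ω => P (ω ∘ σ)).card
      = ((Assignments K N r).filter P).card := by
  refine Finset.card_equiv ⟨fun ω => ω ∘ σ, fun ω => ω ∘ σ.symm, ?_, ?_⟩ ?_
  · intro ω; ext i; simp
  · intro ω; ext i; simp
  · intro ω
    simp only [Finset.mem_filter, Equiv.coe_fn_mk]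
    constructor
    · rintro ⟨h1, h2⟩; exact ⟨comp_perm_mem σ h1, h2⟩
    · rintro ⟨h1, h2⟩
      refine ⟨?_, h2⟩
      have := comp_perm_mem σ.symm h1
      convert this using 1
      ext i; simp

/-- Invariance of counts under postcomposition with a permutation of combos. -/
lemma card_filter_postcomp (π : Equiv.Perm (Combo K)) (P : (Fin N → Combo K) → Prop)
    [DecidablePred P] :
    ((Assignments K N r).filter fun ω => P (π ∘ ω)).card
      = ((Assignments K N r).filter P).card := by
  refine Finset.card_equiv ⟨fun ω => π ∘ ω, fun ω => π.symm ∘ ω, ?_, ?_⟩ ?_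
  · intro ω; ext i; simp
  · intro ω; ext i; simp
  · intro ω
    simp only [Finset.mem_filter, Equiv.coe_fn_mk]
    constructor
    · rintro ⟨h1, h2⟩; exact ⟨postcomp_mem π h1, h2⟩
    · rintro ⟨h1, h2⟩
      refine ⟨?_, h2⟩
      have := postcomp_mem π.symm h1
      convert this using 1
      ext i; simp

lemma exists_perm_pair {α : Type*} [DecidableEq α] {a b a' b' : α}
    (h : a ≠ b) (h' : a' ≠ b') :
    ∃ σ : Equiv.Perm α, σ a = a' ∧ σ b = b' := by
  refine ⟨(Equiv.swap a a').trans (Equiv.swap (Equiv.swap a a' b) b'), ?_, ?_⟩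
  · simp only [Equiv.trans_apply, Equiv.swap_apply_left]
    rw [Equiv.swap_apply_of_ne_of_ne]
    · intro hc
      apply h
      have := congrArg (Equiv.swap a a') hc
      simpa using this
    · exact h'
  · simp [Equiv.trans_apply]

/-- The set of assignments is nonempty. -/
lemma assignments_nonempty (hN : N = r * 2 ^ K) :
    (Assignments K N r).Nonempty := by
  have hcard : Fintype.card (Combo K) = 2 ^ K := by
    simp [Fintype.card_fun]
  obtain ⟨c⟩ : Nonempty (Combo K ≃ Fin (2 ^ K)) := ⟨Fintype.equivFinOfCardEq hcard⟩
  have hN' : N = 2 ^ K * r := by rw [hN, mul_comm]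
  let e : Fin N ≃ Fin (2 ^ K) × Fin r := (finCongr hN').trans finProdFinEquiv.symm
  refine ⟨fun i => c.symm (e i).1, ?_⟩
  rw [mem_assignments]
  intro z
  have : (Finset.univ.filter (fun i : Fin N => c.symm (e i).1 = z)).card
      = (Finset.univ.filter (fun p : Fin (2 ^ K) × Fin r => p.1 = c z)).card := by
    refine Finset.card_equiv e ?_
    intro i
    simp [Equiv.symm_apply_eq]
  rw [this]
  have : (Finset.univ.filter (fun p : Fin (2 ^ K) × Fin r => p.1 = c z))
      = {c z} ×ˢ Finset.univ := by
    ext p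
    simp only [Finset.mem_filter, Finset.mem_univ, true_and, Finset.mem_product,
      Finset.mem_singleton]
    exact ⟨fun h => ⟨h, trivial⟩, fun h => h.1⟩
  rw [this]
  simp

end Aux
section Count

variable {K N r : ℕ}

/-- Number of assignments with ω i = z. -/
def A1c (K N r : ℕ) (i : Fin N) (z : Combo K) : ℕ :=
  ((Assignments K N r).filter fun ω => ω i = z).card

/-- Number of assignments with ω i = z and ω j = zs. -/
def A2c (K N r : ℕ) (i j : Fin N) (z zs : Combo K) : ℕ :=
  ((Assignments K N r).filter fun ω => ω i = z ∧ ω j = zs).card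

lemma A1c_const (i i' : Fin N) (z z' : Combo K) :
    A1c K N r i z = A1c K N r i' z' := by
  have h1 : A1c K N r i z = A1c K N r i' z := by
    unfold A1c
    rw [← card_filter_comp (Equiv.swap i i') (fun ω => ω i' = z)]
    congr 1
    ext ω
    simp [Function.comp, Equiv.swap_apply_right]
  have h2 : A1c K N r i' z = A1c K N r i' z' := by
    unfold A1c
    rw [← card_filter_postcomp (Equiv.swap z z') (fun ω => ω i' = z')]
    congr 1
    ext ω
    simp [Function.comp, Equiv.apply_eq_iff_eq_symm_apply, Equiv.symm_swap,
      Equiv.swap_apply_right]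
  rw [h1, h2]

lemma sum_A1c (i : Fin N) :
    ∑ z : Combo K, A1c K N r i z = (Assignments K N r).card := by
  unfold A1c
  simp only [Finset.card_filter]
  rw [Finset.sum_comm]
  simp

lemma A1c_mul (i : Fin N) (z : Combo K) :
    2 ^ K * A1c K N r i z = (Assignments K N r).card := by
  have h := sum_A1c (K := K) (N := N) (r := r) i
  rw [Finset.sum_congr rfl (fun z' _ => A1c_const i i z' z)] at h
  rw [Finset.sum_const] at h
  simpa [Fintype.card_fun] using h

lemma A2c_unit {i j i' j' : Fin N} (hij : i ≠ j) (hij' : i' ≠ j') (z zs : Combo K) :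
    A2c K N r i j z zs = A2c K N r i' j' z zs := by
  obtain ⟨σ, hσ1, hσ2⟩ := exists_perm_pair hij' hij
  unfold A2c
  rw [← card_filter_comp σ (fun ω => ω i' = z ∧ ω j' = zs)]
  congr 1
  ext ω
  simp [Function.comp, hσ1, hσ2]

lemma A2c_diag_combo (i j : Fin N) (z w : Combo K) :
    A2c K N r i j z z = A2c K N r i j w w := by
  unfold A2c
  rw [← card_filter_postcomp (Equiv.swap z w) (fun ω => ω i = w ∧ ω j = w)]
  congr 1
  ext ω
  simp [Function.comp, Equiv.apply_eq_iff_eq_symm_apply, Equiv.symm_swap,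
    Equiv.swap_apply_right]

lemma A2c_off_combo (i j : Fin N) {z zs w ws : Combo K} (h : z ≠ zs) (h' : w ≠ ws) :
    A2c K N r i j z zs = A2c K N r i j w ws := by
  obtain ⟨π, hπ1, hπ2⟩ := exists_perm_pair h h'
  unfold A2c
  rw [← card_filter_postcomp π (fun ω => ω i = w ∧ ω j = ws)]
  congr 1
  ext ω
  simp [Function.comp, Equiv.apply_eq_iff_eq_symm_apply, ← hπ1, ← hπ2]

lemma sum_A2c (i j : Fin N) (z : Combo K) :
    ∑ zs : Combo K, A2c K N r i j z zs = A1c K N r i z := by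
  unfold A1c A2c
  simp only [Finset.card_filter]
  rw [Finset.sum_comm]
  apply Finset.sum_congr rfl
  intro ω _
  by_cases h : ω i = z
  · simp [h]
  · simp [h]

lemma erase_sum_A2c (i : Fin N) (z : Combo K) :
    ∑ j ∈ Finset.univ.erase i, A2c K N r i j z z = (r - 1) * A1c K N r i z := by
  unfold A1c A2c
  simp only [Finset.card_filter]
  rw [Finset.sum_comm, Finset.mul_sum]
  apply Finset.sum_congr rfl
  intro ω hω
  by_cases h : ω i = z
  · simp only [h, true_and, if_pos]
    have : ∑ j ∈ Finset.univ.erase i, (if ω j = z then 1 else 0)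
        = ((Finset.univ.erase i).filter (fun j => ω j = z)).card := by
      rw [Finset.card_filter]
    rw [this, Finset.filter_erase, Finset.card_erase_of_mem]
    · rw [mem_assignments] at hω
      rw [hω z, mul_one]
    · simp [h]
  · simp [h]

lemma A2c_diag_eq {i j : Fin N} (hij : i ≠ j) (z : Combo K) :
    (N - 1) * A2c K N r i j z z = (r - 1) * A1c K N r i z := by
  have h := erase_sum_A2c (K := K) (N := N) (r := r) i z
  rw [Finset.sum_congr rfl
    (fun j' hj' => A2c_unit (Finset.ne_of_mem_erase hj').symm hij z z)] at h
  rw [Finset.sum_const, Finset.card_erase_of_mem (Finset.mem_univ i)] at h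
  simpa [Finset.card_univ] using h

lemma A2c_split {i j : Fin N} (hij : i ≠ j) {z zs : Combo K} (hz : z ≠ zs) :
    A1c K N r i z = A2c K N r i j z z + (2 ^ K - 1) * A2c K N r i j z zs := by
  have h := (sum_A2c (K := K) (N := N) (r := r) i j z).symm
  rw [← Finset.add_sum_erase Finset.univ _ (Finset.mem_univ z)] at h
  rw [Finset.sum_congr rfl
    (fun zs' hzs' => A2c_off_combo i j (Finset.ne_of_mem_erase hzs').symm hz)] at h
  rw [Finset.sum_const, Finset.card_erase_of_mem (Finset.mem_univ z)] at h
  simpa [Finset.card_univ, Fintype.card_fun] using h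

lemma A2c_diag_self (i : Fin N) (z : Combo K) :
    A2c K N r i i z z = A1c K N r i z := by
  unfold A1c A2c
  congr 1
  ext ω
  simp

lemma A2c_diag_self_ne (i : Fin N) {z zs : Combo K} (h : z ≠ zs) :
    A2c K N r i i z zs = 0 := by
  unfold A2c
  rw [Finset.card_eq_zero, Finset.filter_eq_empty_iff]
  rintro ω - ⟨h1, h2⟩
  exact h (h1 ▸ h2)

end Count
section RealVals

variable {K N r : ℕ}

lemma two_le_N (hK : 1 ≤ K) (hr : 0 < r) (hN : N = r * 2 ^ K) : 2 ≤ N := by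
  have h1 : 2 ≤ 2 ^ K := by
    calc 2 = 2 ^ 1 := by norm_num
    _ ≤ 2 ^ K := Nat.pow_le_pow_right (by norm_num) hK
  calc 2 ≤ 2 ^ K := h1
  _ = 1 * 2 ^ K := (one_mul _).symm
  _ ≤ r * 2 ^ K := Nat.mul_le_mul_right _ hr
  _ = N := hN.symm

lemma r_lt_N (hK : 1 ≤ K) (hr : 0 < r) (hN : N = r * 2 ^ K) : r < N := by
  have h1 : 2 ≤ 2 ^ K := by
    calc 2 = 2 ^ 1 := by norm_num
    _ ≤ 2 ^ K := Nat.pow_le_pow_right (by norm_num) hK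
  rw [hN]; nlinarith [h1, hr]

lemma card_assignments_pos (hN : N = r * 2 ^ K) :
    0 < ((Assignments K N r).card : ℝ) := by
  exact_mod_cast Finset.card_pos.mpr (assignments_nonempty hN)

lemma val_A1R (hr : 0 < r) (hN : N = r * 2 ^ K) (i : Fin N) (z : Combo K) :
    (A1c K N r i z : ℝ) = ((Assignments K N r).card : ℝ) * r / N := by
  have h := A1c_mul (K := K) (N := N) (r := r) i z
  have hcast : (2 : ℝ) ^ K * (A1c K N r i z : ℝ) = ((Assignments K N r).card : ℝ) := by
    exact_mod_cast h
  have hNR : (N : ℝ) = r * 2 ^ K := by rw [hN]; push_cast; ring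
  have hNne : (N : ℝ) ≠ 0 := by rw [hNR]; positivity
  rw [eq_div_iff hNne]
  linear_combination (r : ℝ) * hcast + (A1c K N r i z : ℝ) * hNR

lemma val_A2dR (hK : 1 ≤ K) (hr : 0 < r) (hN : N = r * 2 ^ K)
    {i j : Fin N} (hij : i ≠ j) (z : Combo K) :
    (A2c K N r i j z z : ℝ)
      = ((Assignments K N r).card : ℝ) * (r * ((r : ℝ) - 1)) / (N * ((N : ℝ) - 1)) := by
  have h := A2c_diag_eq (K := K) (N := N) (r := r) hij z
  have h1N : 1 ≤ N := le_trans (by norm_num) (two_le_N hK hr hN)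
  have hcast : ((N : ℝ) - 1) * (A2c K N r i j z z : ℝ)
      = ((r : ℝ) - 1) * (A1c K N r i z : ℝ) := by
    have := congrArg (fun n : ℕ => (n : ℝ)) h
    push_cast [Nat.cast_sub h1N, Nat.cast_sub hr] at this
    exact_mod_cast this
  have hNR : (N : ℝ) = r * 2 ^ K := by rw [hN]; push_cast; ring
  have hNne : (N : ℝ) ≠ 0 := by rw [hNR]; positivity
  have hN1 : (N : ℝ) - 1 ≠ 0 := by
    have : (2 : ℝ) ≤ (N : ℝ) := by exact_mod_cast two_le_N hK hr hN
    linarith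
  have hA1' : (A1c K N r i z : ℝ) * N = ((Assignments K N r).card : ℝ) * r := by
    rw [val_A1R hr hN i z, div_mul_eq_mul_div, mul_div_assoc, div_self hNne, mul_one]
  rw [eq_div_iff (mul_ne_zero hNne hN1)]
  linear_combination (N : ℝ) * hcast + ((r : ℝ) - 1) * hA1'

lemma val_A2oR (hK : 1 ≤ K) (hr : 0 < r) (hN : N = r * 2 ^ K)
    {i j : Fin N} (hij : i ≠ j) {z zs : Combo K} (hz : z ≠ zs) :
    (A2c K N r i j z zs : ℝ)
      = ((Assignments K N r).card : ℝ) * ((r : ℝ) * r) / (N * ((N : ℝ) - 1)) := by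
  have h := A2c_split (K := K) (N := N) (r := r) hij hz
  have h2K : 1 ≤ 2 ^ K := Nat.one_le_two_pow
  have hcast : (A1c K N r i z : ℝ)
      = (A2c K N r i j z z : ℝ) + ((2:ℝ) ^ K - 1) * (A2c K N r i j z zs : ℝ) := by
    have := congrArg (fun n : ℕ => (n : ℝ)) h
    push_cast [Nat.cast_sub h2K] at this
    exact_mod_cast this
  have hNR : (N : ℝ) = r * 2 ^ K := by rw [hN]; push_cast; ring
  have hNne : (N : ℝ) ≠ 0 := by rw [hNR]; positivity
  have hN1 : (N : ℝ) - 1 ≠ 0 := by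
    have : (2 : ℝ) ≤ (N : ℝ) := by exact_mod_cast two_le_N hK hr hN
    linarith
  have hNr : (N : ℝ) - r ≠ 0 := by
    have : (r : ℝ) < (N : ℝ) := by exact_mod_cast r_lt_N hK hr hN
    linarith
  have hA1' : (A1c K N r i z : ℝ) * N = ((Assignments K N r).card : ℝ) * r := by
    rw [val_A1R hr hN i z, div_mul_eq_mul_div, mul_div_assoc, div_self hNne, mul_one]
  have hA2d' : (A2c K N r i j z z : ℝ) * ((N : ℝ) * ((N : ℝ) - 1))
      = ((Assignments K N r).card : ℝ) * ((r : ℝ) * ((r : ℝ) - 1)) := by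
    rw [val_A2dR hK hr hN hij z, div_mul_eq_mul_div, mul_div_assoc,
      div_self (mul_ne_zero hNne hN1), mul_one]
  have hPr : (2 : ℝ) ^ K * r = N := by rw [hNR]; ring
  have h5 : (A2c K N r i j z zs : ℝ) * ((N : ℝ) * ((N : ℝ) - 1)) * ((N : ℝ) - r)
      = ((Assignments K N r).card : ℝ) * ((r : ℝ) * r) * ((N : ℝ) - r) := by
    linear_combination (-(r : ℝ) * N * ((N : ℝ) - 1)) * hcast
      + ((r : ℝ) * ((N : ℝ) - 1)) * hA1' + (-(r : ℝ)) * hA2d'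
      + (-(N : ℝ) * ((N : ℝ) - 1) * (A2c K N r i j z zs : ℝ)) * hPr
  rw [eq_div_iff (mul_ne_zero hNne hN1)]
  exact mul_right_cancel₀ hNr h5

end RealVals

section ExpectBasics

variable {K N r : ℕ}

lemma expect_sum {ι : Type*} (s : Finset ι) (F : ι → (Fin N → Combo K) → ℝ) :
    _root_.expect K N r (fun ω => ∑ x ∈ s, F x ω) = ∑ x ∈ s, _root_.expect K N r (F x) := by
  unfold _root_.expect
  rw [Finset.sum_comm, Finset.sum_div]

lemma expect_mul_left (c : ℝ) (f : (Fin N → Combo K) → ℝ) :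
    _root_.expect K N r (fun ω => c * f ω) = c * _root_.expect K N r f := by
  unfold _root_.expect
  rw [← Finset.mul_sum, mul_div_assoc]

lemma covariance_eq (h : (Assignments K N r).Nonempty) (f g : (Fin N → Combo K) → ℝ) :
    covariance K N r f g
      = _root_.expect K N r (fun ω => f ω * g ω) - _root_.expect K N r f * _root_.expect K N r g := by
  have hn : ((Assignments K N r).card : ℝ) ≠ 0 := by
    exact_mod_cast (Finset.card_pos.mpr h).ne'
  unfold covariance _root_.expect
  set n := ((Assignments K N r).card : ℝ) with hn_def
  set Sf := ∑ ω ∈ Assignments K N r, f ω with hSf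
  set Sg := ∑ ω ∈ Assignments K N r, g ω with hSg
  have expand : ∀ ω, (f ω - Sf / n) * (g ω - Sg / n)
      = f ω * g ω - (Sf / n) * g ω - (Sg / n) * f ω + (Sf / n) * (Sg / n) :=
    fun ω => by ring
  rw [Finset.sum_congr rfl (fun ω _ => expand ω)]
  rw [Finset.sum_add_distrib, Finset.sum_sub_distrib, Finset.sum_sub_distrib,
    ← Finset.mul_sum, ← Finset.mul_sum, Finset.sum_const, nsmul_eq_mul]
  rw [← hSf, ← hSg, ← hn_def]
  field_simp
  ring

end ExpectBasics
section Moments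

variable {K N r : ℕ}

lemma sum_ite_A1 (i : Fin N) (z : Combo K) (c : ℝ) :
    ∑ ω ∈ Assignments K N r, (if ω i = z then c else 0)
      = (A1c K N r i z : ℝ) * c := by
  rw [← Finset.sum_filter, Finset.sum_const, nsmul_eq_mul]
  rfl

lemma sum_ite_A2 (i j : Fin N) (z zs : Combo K) (c : ℝ) :
    ∑ ω ∈ Assignments K N r, (if ω i = z ∧ ω j = zs then c else 0)
      = (A2c K N r i j z zs : ℝ) * c := by
  rw [← Finset.sum_filter, Finset.sum_const, nsmul_eq_mul]
  rfl

lemma sum_Y_eq (hNne : (N : ℝ) ≠ 0) (Y : Fin N → Combo K → ℝ) (z : Combo K) :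
    ∑ i, Y i z = (N : ℝ) * Ybar K N Y z := by
  unfold Ybar
  field_simp

lemma scov_eq (hNne : (N : ℝ) ≠ 0) (Y : Fin N → Combo K → ℝ) (z zs : Combo K) :
    Scov K N Y z zs
      = ((∑ i, Y i z * Y i zs) - (N : ℝ) * Ybar K N Y z * Ybar K N Y zs)
        / ((N : ℝ) - 1) := by
  unfold Scov
  congr 1
  have hexp : ∀ i : Fin N, (Y i z - Ybar K N Y z) * (Y i zs - Ybar K N Y zs)
      = Y i z * Y i zs - Ybar K N Y zs * Y i z - Ybar K N Y z * Y i zs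
        + Ybar K N Y z * Ybar K N Y zs := fun i => by ring
  rw [Finset.sum_congr rfl fun i _ => hexp i, Finset.sum_add_distrib,
    Finset.sum_sub_distrib, Finset.sum_sub_distrib, ← Finset.mul_sum, ← Finset.mul_sum,
    Finset.sum_const, nsmul_eq_mul, sum_Y_eq hNne, sum_Y_eq hNne]
  simp only [Finset.card_univ, Fintype.card_fin]
  ring

lemma scov_self (Y : Fin N → Combo K → ℝ) (z : Combo K) :
    Scov K N Y z z = Ssq K N Y z := by
  unfold Scov Ssq
  congr 1
  exact Finset.sum_congr rfl fun i _ => by rw [pow_two]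

lemma expect_YbarObs (hr : 0 < r) (hN : N = r * 2 ^ K)
    (Y : Fin N → Combo K → ℝ) (z : Combo K) :
    _root_.expect K N r (fun ω => YbarObs K N r Y ω z) = Ybar K N Y z := by
  have hn0 : ((Assignments K N r).card : ℝ) ≠ 0 := (card_assignments_pos hN).ne'
  have hNR : (N : ℝ) = r * 2 ^ K := by rw [hN]; push_cast; ring
  have hNne : (N : ℝ) ≠ 0 := by rw [hNR]; positivity
  have hrR : (r : ℝ) ≠ 0 := Nat.cast_ne_zero.mpr hr.ne'
  unfold _root_.expect YbarObs Ybar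
  rw [← Finset.sum_div, Finset.sum_comm]
  rw [Finset.sum_congr rfl fun i _ => sum_ite_A1 i z (Y i z)]
  rw [Finset.sum_congr rfl fun (i : Fin N) _ => by rw [val_A1R hr hN i z]]
  rw [← Finset.mul_sum]
  field_simp

lemma momObs (hK : 1 ≤ K) (hr : 0 < r) (hN : N = r * 2 ^ K)
    (Y : Fin N → Combo K → ℝ) (z zs : Combo K) :
    _root_.expect K N r (fun ω => YbarObs K N r Y ω z * YbarObs K N r Y ω zs)
      = (if z = zs then Ssq K N Y z / r else 0) - Scov K N Y z zs / N
        + Ybar K N Y z * Ybar K N Y zs := by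
  have hn0 : ((Assignments K N r).card : ℝ) ≠ 0 := (card_assignments_pos hN).ne'
  have hNR : (N : ℝ) = r * 2 ^ K := by rw [hN]; push_cast; ring
  have hNne : (N : ℝ) ≠ 0 := by rw [hNR]; positivity
  have hrR : (r : ℝ) ≠ 0 := Nat.cast_ne_zero.mpr hr.ne'
  have hN1 : (N : ℝ) - 1 ≠ 0 := by
    have : (2 : ℝ) ≤ (N : ℝ) := by exact_mod_cast two_le_N hK hr hN
    linarith
  set n0 := ((Assignments K N r).card : ℝ) with hn0_def
  have h1 : ∀ ω : Fin N → Combo K, YbarObs K N r Y ω z * YbarObs K N r Y ω zs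
      = (∑ i, ∑ j, (if ω i = z ∧ ω j = zs then Y i z * Y j zs else 0)) / ((r : ℝ) * r) := by
    intro ω
    rw [YbarObs, YbarObs, div_mul_div_comm, Finset.sum_mul_sum]
    congr 1
    refine Finset.sum_congr rfl fun i _ => Finset.sum_congr rfl fun j _ => ?_
    by_cases hiz : ω i = z <;> by_cases hjz : ω j = zs <;> simp [hiz, hjz]
  have hE : _root_.expect K N r (fun ω => YbarObs K N r Y ω z * YbarObs K N r Y ω zs)
      = (∑ i, ∑ j, (A2c K N r i j z zs : ℝ) * (Y i z * Y j zs)) / ((r : ℝ) * r) / n0 := by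
    unfold _root_.expect
    rw [Finset.sum_congr rfl fun ω _ => h1 ω, ← Finset.sum_div]
    rw [Finset.sum_comm]
    congr 2
    refine Finset.sum_congr rfl fun i _ => ?_
    rw [Finset.sum_comm]
    exact Finset.sum_congr rfl fun j _ => sum_ite_A2 i j z zs _
  rw [hE]
  by_cases h : z = zs
  · subst h
    rw [if_pos rfl, scov_self]
    set cd := n0 * (r : ℝ) / N with hcd
    set co := n0 * ((r : ℝ) * ((r : ℝ) - 1)) / ((N : ℝ) * ((N : ℝ) - 1)) with hco
    have hform : ∀ i j : Fin N, (A2c K N r i j z z : ℝ) * (Y i z * Y j z)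
        = co * (Y i z * Y j z)
          + (if i = j then (cd - co) * (Y i z * Y j z) else 0) := by
      intro i j
      by_cases hij : i = j
      · subst hij
        rw [if_pos rfl]
        have hd : (A2c K N r i i z z : ℝ) = (A1c K N r i z : ℝ) := by
          exact_mod_cast congrArg (Nat.cast : ℕ → ℝ) (A2c_diag_self (K := K) (N := N) (r := r) i z)
        rw [hd, val_A1R hr hN i z, ← hn0_def, ← hcd]
        ring
      · rw [if_neg hij, val_A2dR hK hr hN hij z, ← hn0_def, ← hco]
        ring
    have hsplit : ∑ i : Fin N, ∑ j : Fin N, (A2c K N r i j z z : ℝ) * (Y i z * Y j z)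
        = co * ((∑ i, Y i z) * (∑ i, Y i z)) + (cd - co) * ∑ i, Y i z * Y i z := by
      rw [Finset.sum_congr rfl fun i _ => Finset.sum_congr rfl fun j _ => hform i j]
      rw [Finset.sum_congr rfl fun (i : Fin N) _ => Finset.sum_add_distrib,
        Finset.sum_add_distrib]
      congr 1
      · rw [Finset.sum_mul_sum, Finset.mul_sum]
        exact Finset.sum_congr rfl fun i _ => by rw [Finset.mul_sum]
      · rw [Finset.mul_sum]
        exact Finset.sum_congr rfl fun i _ => by simp
    rw [hsplit, sum_Y_eq hNne]
    have hSsq : Ssq K N Y z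
        = ((∑ i, Y i z * Y i z) - (N : ℝ) * Ybar K N Y z * Ybar K N Y z)
          / ((N : ℝ) - 1) := by
      rw [← scov_self, scov_eq hNne]
    rw [hSsq, hcd, hco]
    field_simp
    ring
  · rw [if_neg h]
    set co := n0 * ((r : ℝ) * r) / ((N : ℝ) * ((N : ℝ) - 1)) with hco
    have hform : ∀ i j : Fin N, (A2c K N r i j z zs : ℝ) * (Y i z * Y j zs)
        = co * (Y i z * Y j zs)
          - (if i = j then co * (Y i z * Y j zs) else 0) := by
      intro i j
      by_cases hij : i = j
      · subst hij
        rw [if_pos rfl]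
        have hd : (A2c K N r i i z zs : ℝ) = 0 := by
          exact_mod_cast congrArg (Nat.cast : ℕ → ℝ)
            (A2c_diag_self_ne (K := K) (N := N) (r := r) i h)
        rw [hd]
        ring
      · rw [if_neg hij, val_A2oR hK hr hN hij h, ← hn0_def, ← hco]
        ring
    have hsplit : ∑ i : Fin N, ∑ j : Fin N, (A2c K N r i j z zs : ℝ) * (Y i z * Y j zs)
        = co * ((∑ i, Y i z) * (∑ i, Y i zs)) - co * ∑ i, Y i z * Y i zs := by
      rw [Finset.sum_congr rfl fun i _ => Finset.sum_congr rfl fun j _ => hform i j]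
      rw [Finset.sum_congr rfl fun (i : Fin N) _ => Finset.sum_sub_distrib _ _,
        Finset.sum_sub_distrib]
      congr 1
      · rw [Finset.sum_mul_sum, Finset.mul_sum]
        exact Finset.sum_congr rfl fun i _ => by rw [Finset.mul_sum]
      · rw [Finset.mul_sum]
        exact Finset.sum_congr rfl fun i _ => by simp
    rw [hsplit, sum_Y_eq hNne, sum_Y_eq hNne, scov_eq hNne, hco]
    field_simp
    ring

end Moments
section Contrasts

variable {K N r : ℕ}

lemma gA_pm (A : Finset (Fin K)) (z : Combo K) :
    gA K A z = 1 ∨ gA K A z = -1 := by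
  unfold gA
  refine Finset.prod_induction _ (fun x : ℝ => x = 1 ∨ x = -1) ?_ ?_ ?_
  · rintro a b (rfl | rfl) (rfl | rfl) <;> norm_num
  · exact Or.inl rfl
  · intro k _
    by_cases h : z k <;> simp [h]

lemma foursum (A B : Finset (Fin K)) (f : Combo K → ℝ) :
    ∑ z : Combo K, gA K A z * gA K B z * f z
      = (∑ z ∈ Zminus K A ∩ Zminus K B, f z) - (∑ z ∈ Zminus K A ∩ Zplus K B, f z)
        - (∑ z ∈ Zplus K A ∩ Zminus K B, f z) + (∑ z ∈ Zplus K A ∩ Zplus K B, f z) := by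
  classical
  have hdA : ∀ zz : Combo K, (¬ gA K A zz = 1) ↔ gA K A zz = -1 :=
    fun zz => ⟨fun h => (gA_pm A zz).resolve_left h, fun h => by rw [h]; norm_num⟩
  have hdB : ∀ zz : Combo K, (¬ gA K B zz = 1) ↔ gA K B zz = -1 :=
    fun zz => ⟨fun h => (gA_pm B zz).resolve_left h, fun h => by rw [h]; norm_num⟩
  rw [← Finset.sum_filter_add_sum_filter_not Finset.univ (fun z => gA K A z = 1)
    (fun z => gA K A z * gA K B z * f z)]
  rw [← Finset.sum_filter_add_sum_filter_not
    (Finset.univ.filter (fun z : Combo K => gA K A z = 1)) (fun z => gA K B z = 1)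
    (fun z => gA K A z * gA K B z * f z)]
  rw [← Finset.sum_filter_add_sum_filter_not
    (Finset.univ.filter (fun z : Combo K => ¬ gA K A z = 1)) (fun z => gA K B z = 1)
    (fun z => gA K A z * gA K B z * f z)]
  rw [Finset.filter_filter, Finset.filter_filter, Finset.filter_filter,
    Finset.filter_filter]
  have epp : ∑ z ∈ Finset.univ.filter (fun z : Combo K => gA K A z = 1 ∧ gA K B z = 1),
      gA K A z * gA K B z * f z = ∑ z ∈ Zplus K A ∩ Zplus K B, f z := by
    rw [show Finset.univ.filter (fun z : Combo K => gA K A z = 1 ∧ gA K B z = 1)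
        = Zplus K A ∩ Zplus K B from by ext zz; simp [Zplus]]
    refine Finset.sum_congr rfl fun zz hz => ?_
    simp only [Zplus, Finset.mem_inter, Finset.mem_filter] at hz
    rw [hz.1.2, hz.2.2]; ring
  have epm : ∑ z ∈ Finset.univ.filter (fun z : Combo K => gA K A z = 1 ∧ ¬ gA K B z = 1),
      gA K A z * gA K B z * f z = -∑ z ∈ Zplus K A ∩ Zminus K B, f z := by
    rw [show Finset.univ.filter (fun z : Combo K => gA K A z = 1 ∧ ¬ gA K B z = 1)
        = Zplus K A ∩ Zminus K B from by ext zz; simp [Zplus, Zminus, hdB]]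
    rw [← Finset.sum_neg_distrib]
    refine Finset.sum_congr rfl fun zz hz => ?_
    simp only [Zplus, Zminus, Finset.mem_inter, Finset.mem_filter] at hz
    rw [hz.1.2, hz.2.2]; ring
  have emp : ∑ z ∈ Finset.univ.filter (fun z : Combo K => ¬ gA K A z = 1 ∧ gA K B z = 1),
      gA K A z * gA K B z * f z = -∑ z ∈ Zminus K A ∩ Zplus K B, f z := by
    rw [show Finset.univ.filter (fun z : Combo K => ¬ gA K A z = 1 ∧ gA K B z = 1)
        = Zminus K A ∩ Zplus K B from by ext zz; simp [Zplus, Zminus, hdA]]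
    rw [← Finset.sum_neg_distrib]
    refine Finset.sum_congr rfl fun zz hz => ?_
    simp only [Zplus, Zminus, Finset.mem_inter, Finset.mem_filter] at hz
    rw [hz.1.2, hz.2.2]; ring
  have emm : ∑ z ∈ Finset.univ.filter (fun z : Combo K => ¬ gA K A z = 1 ∧ ¬ gA K B z = 1),
      gA K A z * gA K B z * f z = ∑ z ∈ Zminus K A ∩ Zminus K B, f z := by
    rw [show Finset.univ.filter (fun z : Combo K => ¬ gA K A z = 1 ∧ ¬ gA K B z = 1)
        = Zminus K A ∩ Zminus K B from by ext zz; simp [Zminus, hdA, hdB]]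
    refine Finset.sum_congr rfl fun zz hz => ?_
    simp only [Zminus, Finset.mem_inter, Finset.mem_filter] at hz
    rw [hz.1.2, hz.2.2]; ring
  rw [epp, epm, emp, emm]
  ring

lemma tauBar_eq (Y : Fin N → Combo K → ℝ) (A : Finset (Fin K)) :
    tauBar K N Y A = (∑ z : Combo K, gA K A z * Ybar K N Y z) / (2 : ℝ) ^ (K - 1) := by
  unfold tauBar tauUnit Ybar
  simp only [← Finset.sum_div, ← mul_div_assoc]
  rw [Finset.sum_comm]
  simp only [← Finset.mul_sum]
  rw [div_right_comm]

lemma sum_gA_sub (Y : Fin N → Combo K → ℝ) (A : Finset (Fin K)) (i : Fin N) :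
    ∑ z : Combo K, gA K A z * (Y i z - Ybar K N Y z)
      = (2 : ℝ) ^ (K - 1) * (tauUnit K N Y A i - tauBar K N Y A) := by
  have hc : ((2 : ℝ)) ^ (K - 1) ≠ 0 := by positivity
  have h1 : ∑ z : Combo K, gA K A z * Y i z = (2 : ℝ) ^ (K - 1) * tauUnit K N Y A i := by
    rw [tauUnit, mul_div_cancel₀ _ hc]
  have h2 : ∑ z : Combo K, gA K A z * Ybar K N Y z
      = (2 : ℝ) ^ (K - 1) * tauBar K N Y A := by
    rw [tauBar_eq, mul_div_cancel₀ _ hc]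
  simp only [mul_sub]
  rw [Finset.sum_sub_distrib, h1, h2]

lemma sum_sum_scov (Y : Fin N → Combo K → ℝ) (A B : Finset (Fin K)) :
    ∑ z : Combo K, ∑ zs : Combo K, gA K A z * gA K B zs * Scov K N Y z zs
      = ((2 : ℝ) ^ (K - 1) * (2 : ℝ) ^ (K - 1)) * SsqAB K N Y A B := by
  have key : ∀ z zs : Combo K, gA K A z * gA K B zs * Scov K N Y z zs
      = (∑ i, (gA K A z * (Y i z - Ybar K N Y z))
          * (gA K B zs * (Y i zs - Ybar K N Y zs))) / ((N : ℝ) - 1) := by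
    intro z zs
    rw [Scov, ← mul_div_assoc]
    congr 1
    rw [Finset.mul_sum]
    exact Finset.sum_congr rfl fun i _ => by ring
  rw [Finset.sum_congr rfl fun z _ => Finset.sum_congr rfl fun zs _ => key z zs]
  simp only [← Finset.sum_div]
  rw [Finset.sum_comm]
  rw [Finset.sum_congr rfl fun z _ => Finset.sum_comm]
  rw [Finset.sum_comm]
  rw [Finset.sum_congr rfl fun (i : Fin N) _ => Finset.sum_comm]
  rw [Finset.sum_congr rfl fun i _ => (Finset.sum_mul_sum _ _ _ _).symm]
  rw [Finset.sum_congr rfl fun (i : Fin N) _ => by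
    rw [sum_gA_sub Y A i, sum_gA_sub Y B i]]
  rw [SsqAB]
  rw [show (∑ i : Fin N, (2:ℝ)^(K-1) * (tauUnit K N Y A i - tauBar K N Y A)
        * ((2:ℝ)^(K-1) * (tauUnit K N Y B i - tauBar K N Y B)))
      = ((2:ℝ)^(K-1) * (2:ℝ)^(K-1))
        * ∑ i : Fin N, (tauUnit K N Y A i - tauBar K N Y A)
            * (tauUnit K N Y B i - tauBar K N Y B) from by
    rw [Finset.mul_sum]
    exact Finset.sum_congr rfl fun i _ => by ring]
  rw [mul_div_assoc]

end Contrasts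
/-- Theorem 3. The sampling covariance between two estimated
factorial effects. -/
theorem tauHat_covariance (K N r : ℕ) (hK : 1 ≤ K) (hr : 0 < r) (hN : N = r * 2 ^ K)
    (Y : Fin N → Combo K → ℝ) (A B : Finset (Fin K))
    (hA : A.Nonempty) (hB : B.Nonempty) (hAB : A ≠ B) :
    covariance K N r (tauHat K N r Y A) (tauHat K N r Y B) =
      (1 / ((2 : ℝ) ^ (2 * (K - 1)) * (r : ℝ))) *
        ((∑ z ∈ Zminus K A ∩ Zminus K B, Ssq K N Y z) -
          (∑ z ∈ Zminus K A ∩ Zplus K B, Ssq K N Y z) -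
          (∑ z ∈ Zplus K A ∩ Zminus K B, Ssq K N Y z) +
          (∑ z ∈ Zplus K A ∩ Zplus K B, Ssq K N Y z)) -
      (1 / (N : ℝ)) * SsqAB K N Y A B := by
  classical
  have hne : (Assignments K N r).Nonempty := assignments_nonempty hN
  have hc : ((2 : ℝ)) ^ (K - 1) ≠ 0 := by positivity
  have hNR : (N : ℝ) = r * 2 ^ K := by rw [hN]; push_cast; ring
  have hNne : (N : ℝ) ≠ 0 := by rw [hNR]; positivity
  have hrR : (r : ℝ) ≠ 0 := Nat.cast_ne_zero.mpr hr.ne'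
  have hpt : ∀ ω : Fin N → Combo K, tauHat K N r Y A ω * tauHat K N r Y B ω
      = ∑ z : Combo K, ∑ zs : Combo K,
          ((gA K A z / (2 : ℝ) ^ (K - 1)) * (gA K B zs / (2 : ℝ) ^ (K - 1)))
            * (YbarObs K N r Y ω z * YbarObs K N r Y ω zs) := by
    intro ω
    rw [tauHat, tauHat, div_mul_div_comm, Finset.sum_mul_sum, Finset.sum_div]
    refine Finset.sum_congr rfl fun z _ => ?_
    rw [Finset.sum_div]
    exact Finset.sum_congr rfl fun zs _ => by ring
  have hfg : _root_.expect K N r (fun ω => tauHat K N r Y A ω * tauHat K N r Y B ω)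
      = ∑ z : Combo K, ∑ zs : Combo K,
          ((gA K A z / (2 : ℝ) ^ (K - 1)) * (gA K B zs / (2 : ℝ) ^ (K - 1)))
            * ((if z = zs then Ssq K N Y z / r else 0) - Scov K N Y z zs / N
              + Ybar K N Y z * Ybar K N Y zs) := by
    rw [show (fun ω => tauHat K N r Y A ω * tauHat K N r Y B ω)
        = fun ω => ∑ z : Combo K, ∑ zs : Combo K,
            ((gA K A z / (2 : ℝ) ^ (K - 1)) * (gA K B zs / (2 : ℝ) ^ (K - 1)))
              * (YbarObs K N r Y ω z * YbarObs K N r Y ω zs) from funext hpt]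
    rw [expect_sum]
    refine Finset.sum_congr rfl fun z _ => ?_
    rw [expect_sum]
    refine Finset.sum_congr rfl fun zs _ => ?_
    rw [expect_mul_left, momObs hK hr hN]
  have hEA : _root_.expect K N r (tauHat K N r Y A)
      = ∑ z : Combo K, (gA K A z / (2 : ℝ) ^ (K - 1)) * Ybar K N Y z := by
    rw [show tauHat K N r Y A = fun ω => ∑ z : Combo K,
        (gA K A z / (2 : ℝ) ^ (K - 1)) * YbarObs K N r Y ω z from funext fun ω => by
      rw [tauHat, Finset.sum_div]
      exact Finset.sum_congr rfl fun z _ => by ring]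
    rw [expect_sum]
    exact Finset.sum_congr rfl fun z _ => by rw [expect_mul_left, expect_YbarObs hr hN]
  have hEB : _root_.expect K N r (tauHat K N r Y B)
      = ∑ zs : Combo K, (gA K B zs / (2 : ℝ) ^ (K - 1)) * Ybar K N Y zs := by
    rw [show tauHat K N r Y B = fun ω => ∑ zs : Combo K,
        (gA K B zs / (2 : ℝ) ^ (K - 1)) * YbarObs K N r Y ω zs from funext fun ω => by
      rw [tauHat, Finset.sum_div]
      exact Finset.sum_congr rfl fun zs _ => by ring]
    rw [expect_sum]
    exact Finset.sum_congr rfl fun zs _ => by rw [expect_mul_left, expect_YbarObs hr hN]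
  rw [covariance_eq hne, hfg, hEA, hEB, Finset.sum_mul_sum]
  simp only [← Finset.sum_sub_distrib]
  have hsummand : ∀ z zs : Combo K,
      (gA K A z / (2 : ℝ) ^ (K - 1)) * (gA K B zs / (2 : ℝ) ^ (K - 1))
          * ((if z = zs then Ssq K N Y z / r else 0) - Scov K N Y z zs / N
            + Ybar K N Y z * Ybar K N Y zs)
        - (gA K A z / (2 : ℝ) ^ (K - 1)) * Ybar K N Y z
            * ((gA K B zs / (2 : ℝ) ^ (K - 1)) * Ybar K N Y zs)
      = (if z = zs then (gA K A z / (2 : ℝ) ^ (K - 1))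
            * (gA K B zs / (2 : ℝ) ^ (K - 1)) * (Ssq K N Y z / r) else 0)
        - (1 / ((2 : ℝ) ^ (K - 1) * (2 : ℝ) ^ (K - 1) * N))
            * (gA K A z * gA K B zs * Scov K N Y z zs) := by
    intro z zs
    by_cases h : z = zs
    · subst h
      rw [if_pos rfl, if_pos rfl]
      ring
    · simp only [if_neg h]
      ring
  rw [Finset.sum_congr rfl fun (z : Combo K) _ =>
    Finset.sum_congr rfl fun (zs : Combo K) _ => hsummand z zs]
  simp only [Finset.sum_sub_distrib]
  simp only [Finset.sum_ite_eq, Finset.mem_univ, if_pos]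
  simp only [← Finset.mul_sum]
  rw [sum_sum_scov]
  have t1 : ∑ z : Combo K, (gA K A z / (2 : ℝ) ^ (K - 1))
        * (gA K B z / (2 : ℝ) ^ (K - 1)) * (Ssq K N Y z / r)
      = (1 / ((2 : ℝ) ^ (K - 1) * (2 : ℝ) ^ (K - 1) * r))
        * ∑ z : Combo K, gA K A z * gA K B z * Ssq K N Y z := by
    rw [Finset.mul_sum]
    exact Finset.sum_congr rfl fun z _ => by ring
  rw [t1, foursum A B (Ssq K N Y)]
  have hpow : (2 : ℝ) ^ (2 * (K - 1)) = (2 : ℝ) ^ (K - 1) * (2 : ℝ) ^ (K - 1) := by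
    rw [two_mul, pow_add]
  rw [hpow]
  field_simp
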